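/- Let 0 < k < 1, λ = √(1−k), and let f : [0,∞) → (0,∞) give a surface of revolution Σ_f of constant Gaussian curvature k about a geodesic in ℍ³, with f, f' → 0 at infinity, so that for every δ > 0 there are T, B > A > 0 with A·e^{−(λ+δ)t} ≤ f(t), −f'(t) ≤ B·e^{−(λ−δ)t} for t > T. Define Area(t) = ∫_t^∞ ∫_0^{2π} f·((1+f²) + (f')²(1+f²)^{−1})^{1/2} dθ ds (the hyperbolic area of Σ_f over [t,∞)) and Vol(t) = ∫_t^∞ ∫_0^{2π} ∫_0^{f(s)} R dR dθ ds (the hyperbolic volume enclosed over [t,∞)). Then for every δ > 0 there exist T' > 0 and constants B' > A' > 0 such that for t > T': A'·e^{−(λ+δ)t} ≤ Area(t) ≤ B'·e^{−(λ−δ)t} and A'·e^{−2(λ+δ)t} ≤ Vol(t) ≤ B'·e^{−2(λ−δ)t}. -/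

import Mathlib

open Real MeasureTheory

set_option maxHeartbeats 1000000

lemma int_exp_Ioi {b : ℝ} (hb : 0 < b) (t : ℝ) :
    ∫ s in Set.Ioi t, Real.exp (-b * s) = Real.exp (-b * t) / b := by
  have h : ∀ x ∈ Set.Ici t, HasDerivAt (fun s => -Real.exp (-b * s) / b)
      (Real.exp (-b * x)) x := by
    intro x _
    have h1 : HasDerivAt (fun s : ℝ => -b * s) (-b) x := by
      simpa using (hasDerivAt_id x).const_mul (-b)
    have h2 := (Real.hasDerivAt_exp (-b * x)).comp x h1
    have h3 := ((h2.neg).div_const b)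
    refine h3.congr_deriv ?_
    field_simp
  have htend : Filter.Tendsto (fun s => -Real.exp (-b * s) / b) Filter.atTop (nhds 0) := by
    have h0 : Filter.Tendsto (fun s : ℝ => -b * s) Filter.atTop Filter.atBot :=
      Filter.tendsto_id.const_mul_atTop_of_neg (neg_neg_iff_pos.mpr hb)
    have := (Real.tendsto_exp_atBot.comp h0).neg.div_const b
    simpa using this
  have := integral_Ioi_of_hasDerivAt_of_tendsto' h (exp_neg_integrableOn_Ioi t hb) htend
  rw [this]; field_simp; ring

lemma sandwich {g : ℝ → ℝ} (hg : Continuous g) {T a b CA CB : ℝ} (ha : 0 < a) (hb : 0 < b)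
    (hCA : 0 ≤ CA)
    (hlow : ∀ s > T, CA * Real.exp (-a * s) ≤ g s)
    (hhigh : ∀ s > T, g s ≤ CB * Real.exp (-b * s)) {t : ℝ} (ht : T < t) :
    CA * Real.exp (-a * t) / a ≤ ∫ s in Set.Ioi t, g s ∧
      (∫ s in Set.Ioi t, g s) ≤ CB * Real.exp (-b * t) / b := by
  have hint : IntegrableOn g (Set.Ioi t) := by
    refine Integrable.mono' ((exp_neg_integrableOn_Ioi t hb).const_mul CB)
      hg.aestronglyMeasurable ?_
    filter_upwards [ae_restrict_mem measurableSet_Ioi] with s hs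
    have hs' : T < s := ht.trans hs
    rw [Real.norm_eq_abs, abs_of_nonneg ((mul_nonneg hCA (Real.exp_pos _).le).trans (hlow s hs'))]
    exact hhigh s hs'
  have hintl : IntegrableOn (fun s => CA * Real.exp (-a * s)) (Set.Ioi t) :=
    (exp_neg_integrableOn_Ioi t ha).const_mul CA
  have hinth : IntegrableOn (fun s => CB * Real.exp (-b * s)) (Set.Ioi t) :=
    (exp_neg_integrableOn_Ioi t hb).const_mul CB
  constructor
  · calc CA * Real.exp (-a * t) / a = ∫ s in Set.Ioi t, CA * Real.exp (-a * s) := by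
          rw [MeasureTheory.integral_const_mul, int_exp_Ioi ha]; ring
    _ ≤ ∫ s in Set.Ioi t, g s :=
          setIntegral_mono_on hintl hint measurableSet_Ioi
            (fun s hs => hlow s (ht.trans hs))
  · calc (∫ s in Set.Ioi t, g s) ≤ ∫ s in Set.Ioi t, CB * Real.exp (-b * s) :=
          setIntegral_mono_on hint hinth measurableSet_Ioi
            (fun s hs => hhigh s (ht.trans hs))
    _ = CB * Real.exp (-b * t) / b := by
          rw [MeasureTheory.integral_const_mul, int_exp_Ioi hb]; ring

/-- The hyperbolic area of the part of the surface of revolution `R = f(t)`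
(in polar coordinates about a geodesic in `ℍ³`) lying over `[t, ∞)`. -/
noncomputable def cuspArea (f : ℝ → ℝ) (t : ℝ) : ℝ :=
  ∫ s in Set.Ioi t, ∫ _θ in (0:ℝ)..(2 * Real.pi),
    f s * Real.sqrt ((1 + f s ^ 2) + (deriv f s) ^ 2 * (1 + f s ^ 2)⁻¹)

/-- The hyperbolic volume enclosed by the surface of revolution `R = f(t)`
over `[t, ∞)` (the volume form being `R dt ∧ dR ∧ dθ`). -/
noncomputable def cuspVol (f : ℝ → ℝ) (t : ℝ) : ℝ :=
  ∫ s in Set.Ioi t, ∫ _θ in (0:ℝ)..(2 * Real.pi), ∫ R in (0:ℝ)..(f s), R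

lemma cuspArea_eq (f : ℝ → ℝ) (t : ℝ) :
    cuspArea f t = ∫ s in Set.Ioi t,
      (2 * Real.pi) * (f s * Real.sqrt ((1 + f s ^ 2) + (deriv f s) ^ 2 * (1 + f s ^ 2)⁻¹)) := by
  unfold cuspArea
  congr 1
  funext s
  rw [intervalIntegral.integral_const]
  simp [smul_eq_mul]

lemma cuspVol_eq (f : ℝ → ℝ) (t : ℝ) :
    cuspVol f t = ∫ s in Set.Ioi t, Real.pi * f s ^ 2 := by
  unfold cuspVol
  congr 1
  funext s
  rw [integral_id, intervalIntegral.integral_const]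
  simp [smul_eq_mul]
  ring

theorem area_and_volume_of_rotationally_symmetric_cusp
    (k lam : ℝ) (hk : 0 < k) (hk1 : k < 1) (hlam : lam = Real.sqrt (1 - k))
    (f : ℝ → ℝ) (hf : ContDiff ℝ 2 f) (hpos : ∀ t ≥ (0:ℝ), 0 < f t)
    -- the surface of revolution has constant Gaussian curvature `k`:
    (hcurv : ∀ t ≥ (0:ℝ),
      k * f t * ((1 + f t ^ 2) + (deriv f t) ^ 2 * (1 + f t ^ 2)⁻¹) ^ ((3:ℝ) / 2)
        = (1 + f t ^ 2) * (-(deriv (deriv f) t) * (1 + f t ^ 2)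
            + f t * (1 + f t ^ 2) ^ 2 + 3 * f t * (deriv f t) ^ 2))
    (hf0 : Filter.Tendsto f Filter.atTop (nhds 0))
    (hf'0 : Filter.Tendsto (deriv f) Filter.atTop (nhds 0))
    -- the exponential decay bounds from the preceding lemma:
    (hdecay : ∀ δ > (0:ℝ), ∃ T A B : ℝ, 0 < A ∧ A < B ∧ ∀ t > T,
      (A * Real.exp (-(lam + δ) * t) ≤ f t ∧ f t ≤ B * Real.exp (-(lam - δ) * t)) ∧
      (A * Real.exp (-(lam + δ) * t) ≤ -deriv f t ∧
        -deriv f t ≤ B * Real.exp (-(lam - δ) * t))) :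
    ∀ δ > (0:ℝ), ∃ T' > (0:ℝ), ∃ A' B' : ℝ, 0 < A' ∧ A' < B' ∧ ∀ t > T',
      (A' * Real.exp (-(lam + δ) * t) ≤ cuspArea f t ∧
        cuspArea f t ≤ B' * Real.exp (-(lam - δ) * t)) ∧
      (A' * Real.exp (-2 * (lam + δ) * t) ≤ cuspVol f t ∧
        cuspVol f t ≤ B' * Real.exp (-2 * (lam - δ) * t)) := by
  intro δ hδ
  have hlampos : 0 < lam := by
    rw [hlam]; exact Real.sqrt_pos.mpr (by linarith)
  obtain ⟨δ', hδ'pos, hδ'δ, hδ'lam⟩ : ∃ δ', 0 < δ' ∧ δ' ≤ δ ∧ δ' < lam := by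
    refine ⟨min δ lam / 2, div_pos (lt_min hδ hlampos) two_pos, ?_, ?_⟩
    · have := min_le_left δ lam; linarith
    · have := min_le_right δ lam; linarith
  have hbl : 0 < lam - δ' := by linarith
  have hlamδ : 0 < lam + δ' := by linarith
  obtain ⟨T, A, B, hA, hAB, hbd⟩ := hdecay δ' hδ'pos
  have hB : 0 < B := hA.trans hAB
  -- continuity of the integrands
  have hcf : Continuous f := hf.continuous
  have hcf' : Continuous (deriv f) := hf.continuous_deriv one_le_two
  have hne : ∀ s : ℝ, (1:ℝ) + f s ^ 2 ≠ 0 := fun s => by positivity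
  have harg : Continuous (fun s => (1 + f s ^ 2) + (deriv f s) ^ 2 * (1 + f s ^ 2)⁻¹) :=
    (continuous_const.add (hcf.pow 2)).add
      ((hcf'.pow 2).mul ((continuous_const.add (hcf.pow 2)).inv₀ hne))
  have hgA : Continuous (fun s =>
      (2 * Real.pi) * (f s * Real.sqrt ((1 + f s ^ 2) + (deriv f s) ^ 2 * (1 + f s ^ 2)⁻¹))) :=
    continuous_const.mul (hcf.mul (Real.continuous_sqrt.comp harg))
  have hgV : Continuous (fun s => Real.pi * f s ^ 2) := continuous_const.mul (hcf.pow 2)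
  -- the sqrt upper bound constant
  set C : ℝ := Real.sqrt (1 + B ^ 2 + B ^ 2) with hCdef
  have hC1 : 1 ≤ C := by
    have h1 : (1:ℝ) ≤ 1 + B ^ 2 + B ^ 2 := by nlinarith
    calc (1:ℝ) = Real.sqrt 1 := Real.sqrt_one.symm
      _ ≤ C := Real.sqrt_le_sqrt h1
  have hC0 : 0 ≤ C := by linarith
  -- the constants
  set A1 : ℝ := 2 * Real.pi * A / (lam + δ') with hA1def
  set A2 : ℝ := Real.pi * A ^ 2 / (2 * (lam + δ')) with hA2def
  set B1 : ℝ := 2 * Real.pi * B * C / (lam - δ') with hB1def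
  set B2 : ℝ := Real.pi * B ^ 2 / (2 * (lam - δ')) with hB2def
  have hA1pos : 0 < A1 := div_pos (by positivity) hlamδ
  have hA2pos : 0 < A2 := div_pos (by positivity) (by linarith)
  have hB1pos : 0 < B1 := div_pos (by positivity) hbl
  have hB2pos : 0 < B2 := div_pos (by positivity) (by linarith)
  refine ⟨max T 1, lt_of_lt_of_le one_pos (le_max_right T 1), min A1 A2,
    max B1 B2 + min A1 A2 + 1, lt_min hA1pos hA2pos, ?_, ?_⟩
  · have h1 := le_max_left B1 B2
    linarith [hB1pos]
  intro t ht
  have htT : T < t := lt_of_le_of_lt (le_max_left T 1) ht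
  have ht1 : 1 < t := lt_of_le_of_lt (le_max_right T 1) ht
  have ht0 : 0 < t := lt_trans one_pos ht1
  -- pointwise bounds on the area integrand
  have hlowA : ∀ s > max T 1, (2 * Real.pi * A) * Real.exp (-(lam + δ') * s) ≤
      (2 * Real.pi) * (f s * Real.sqrt ((1 + f s ^ 2) + (deriv f s) ^ 2 * (1 + f s ^ 2)⁻¹)) := by
    intro s hs
    obtain ⟨⟨hf1, _⟩, _, _⟩ := hbd s (lt_of_le_of_lt (le_max_left T 1) hs)
    have hfpos : 0 < f s := lt_of_lt_of_le (mul_pos hA (Real.exp_pos _)) hf1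
    have hsq : 1 ≤ Real.sqrt ((1 + f s ^ 2) + (deriv f s) ^ 2 * (1 + f s ^ 2)⁻¹) := by
      have h0 : 0 ≤ (deriv f s) ^ 2 * (1 + f s ^ 2)⁻¹ := by positivity
      have h1 : (1:ℝ) ≤ (1 + f s ^ 2) + (deriv f s) ^ 2 * (1 + f s ^ 2)⁻¹ := by
        nlinarith [sq_nonneg (f s)]
      calc (1:ℝ) = Real.sqrt 1 := Real.sqrt_one.symm
        _ ≤ _ := Real.sqrt_le_sqrt h1
    calc 2 * Real.pi * A * Real.exp (-(lam + δ') * s)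
        = 2 * Real.pi * (A * Real.exp (-(lam + δ') * s)) := by ring
      _ ≤ 2 * Real.pi * f s := by
          apply mul_le_mul_of_nonneg_left hf1 (by positivity)
      _ ≤ 2 * Real.pi * (f s * Real.sqrt ((1 + f s ^ 2) + (deriv f s) ^ 2 * (1 + f s ^ 2)⁻¹)) := by
          apply mul_le_mul_of_nonneg_left (le_mul_of_one_le_right hfpos.le hsq) (by positivity)
  have hhighA : ∀ s > max T 1,
      (2 * Real.pi) * (f s * Real.sqrt ((1 + f s ^ 2) + (deriv f s) ^ 2 * (1 + f s ^ 2)⁻¹)) ≤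
      (2 * Real.pi * B * C) * Real.exp (-(lam - δ') * s) := by
    intro s hs
    have hs0 : 0 < s := lt_trans one_pos (lt_of_le_of_lt (le_max_right T 1) hs)
    obtain ⟨⟨hf1, hf2⟩, hf'1, hf'2⟩ := hbd s (lt_of_le_of_lt (le_max_left T 1) hs)
    have hfpos : 0 < f s := lt_of_lt_of_le (mul_pos hA (Real.exp_pos _)) hf1
    have he1 : Real.exp (-(lam - δ') * s) ≤ 1 := by
      rw [Real.exp_le_one_iff]; nlinarith
    have hfB : f s ≤ B := hf2.trans (by nlinarith)
    have hf'B : -deriv f s ≤ B := hf'2.trans (by nlinarith)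
    have hf'0' : 0 ≤ -deriv f s := le_trans (by positivity) hf'1
    have hinv : (1 + f s ^ 2)⁻¹ ≤ 1 := by
      rw [inv_le_one_iff₀]; right; nlinarith
    have h2 : (deriv f s) ^ 2 ≤ B ^ 2 := by nlinarith
    have h3 : f s ^ 2 ≤ B ^ 2 := by nlinarith
    have h4 : (deriv f s) ^ 2 * (1 + f s ^ 2)⁻¹ ≤ B ^ 2 := by
      have := mul_le_mul h2 hinv (by positivity) (sq_nonneg B)
      linarith [this]
    have hsqle : Real.sqrt ((1 + f s ^ 2) + (deriv f s) ^ 2 * (1 + f s ^ 2)⁻¹) ≤ C := by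
      rw [hCdef]
      exact Real.sqrt_le_sqrt (by linarith)
    calc (2 * Real.pi) * (f s * Real.sqrt ((1 + f s ^ 2) + (deriv f s) ^ 2 * (1 + f s ^ 2)⁻¹))
        ≤ (2 * Real.pi) * ((B * Real.exp (-(lam - δ') * s)) * C) := by
          apply mul_le_mul_of_nonneg_left _ (by positivity)
          exact mul_le_mul hf2 hsqle (Real.sqrt_nonneg _) (by positivity)
      _ = (2 * Real.pi * B * C) * Real.exp (-(lam - δ') * s) := by ring
  -- pointwise bounds on the volume integrand
  have hexp2 : ∀ c s : ℝ, Real.exp (-c * s) ^ 2 = Real.exp (-(2 * c) * s) := by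
    intro c s
    rw [← Real.exp_nat_mul]
    congr 1; push_cast; ring
  have hlowV : ∀ s > max T 1, (Real.pi * A ^ 2) * Real.exp (-(2 * (lam + δ')) * s) ≤
      Real.pi * f s ^ 2 := by
    intro s hs
    obtain ⟨⟨hf1, _⟩, _, _⟩ := hbd s (lt_of_le_of_lt (le_max_left T 1) hs)
    have h1 : (A * Real.exp (-(lam + δ') * s)) ^ 2 ≤ f s ^ 2 :=
      pow_le_pow_left₀ (by positivity) hf1 2
    calc (Real.pi * A ^ 2) * Real.exp (-(2 * (lam + δ')) * s)
        = Real.pi * (A * Real.exp (-(lam + δ') * s)) ^ 2 := by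
          rw [mul_pow, hexp2]; ring
      _ ≤ Real.pi * f s ^ 2 := mul_le_mul_of_nonneg_left h1 Real.pi_pos.le
  have hhighV : ∀ s > max T 1, Real.pi * f s ^ 2 ≤
      (Real.pi * B ^ 2) * Real.exp (-(2 * (lam - δ')) * s) := by
    intro s hs
    obtain ⟨⟨hf1, hf2⟩, _, _⟩ := hbd s (lt_of_le_of_lt (le_max_left T 1) hs)
    have hfpos : 0 < f s := lt_of_lt_of_le (mul_pos hA (Real.exp_pos _)) hf1
    have h1 : f s ^ 2 ≤ (B * Real.exp (-(lam - δ') * s)) ^ 2 :=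
      pow_le_pow_left₀ hfpos.le hf2 2
    calc Real.pi * f s ^ 2 ≤ Real.pi * (B * Real.exp (-(lam - δ') * s)) ^ 2 :=
          mul_le_mul_of_nonneg_left h1 Real.pi_pos.le
      _ = (Real.pi * B ^ 2) * Real.exp (-(2 * (lam - δ')) * s) := by
          rw [mul_pow, hexp2]; ring
  obtain ⟨hAlo, hAhi⟩ := sandwich hgA hlamδ hbl (by positivity) hlowA hhighA ht
  obtain ⟨hVlo, hVhi⟩ := sandwich hgV (by linarith) (by linarith) (by positivity) hlowV hhighV ht
  rw [cuspArea_eq, cuspVol_eq]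
  have hBmax : (0:ℝ) ≤ max B1 B2 + min A1 A2 + 1 := by
    have := le_max_left B1 B2
    have := lt_min hA1pos hA2pos
    linarith
  refine ⟨⟨?_, ?_⟩, ?_, ?_⟩
  · calc min A1 A2 * Real.exp (-(lam + δ) * t)
        ≤ A1 * Real.exp (-(lam + δ') * t) := by
          apply mul_le_mul (min_le_left _ _) (Real.exp_le_exp.mpr (by nlinarith))
            (Real.exp_pos _).le hA1pos.le
      _ = 2 * Real.pi * A * Real.exp (-(lam + δ') * t) / (lam + δ') := by
          rw [hA1def]; ring
      _ ≤ _ := hAlo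
  · calc (∫ s in Set.Ioi t,
          (2 * Real.pi) * (f s * Real.sqrt ((1 + f s ^ 2) + (deriv f s) ^ 2 * (1 + f s ^ 2)⁻¹)))
        ≤ 2 * Real.pi * B * C * Real.exp (-(lam - δ') * t) / (lam - δ') := hAhi
      _ = B1 * Real.exp (-(lam - δ') * t) := by rw [hB1def]; ring
      _ ≤ (max B1 B2 + min A1 A2 + 1) * Real.exp (-(lam - δ) * t) := by
          apply mul_le_mul ?_ (Real.exp_le_exp.mpr (by nlinarith)) (Real.exp_pos _).le hBmax
          have := le_max_left B1 B2
          have := lt_min hA1pos hA2pos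
          linarith
  · calc min A1 A2 * Real.exp (-2 * (lam + δ) * t)
        ≤ A2 * Real.exp (-(2 * (lam + δ')) * t) := by
          apply mul_le_mul (min_le_right _ _) (Real.exp_le_exp.mpr (by nlinarith))
            (Real.exp_pos _).le hA2pos.le
      _ = Real.pi * A ^ 2 * Real.exp (-(2 * (lam + δ')) * t) / (2 * (lam + δ')) := by
          rw [hA2def]; ring
      _ ≤ _ := hVlo
  · calc (∫ s in Set.Ioi t, Real.pi * f s ^ 2)
        ≤ Real.pi * B ^ 2 * Real.exp (-(2 * (lam - δ')) * t) / (2 * (lam - δ')) := hVhi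
      _ = B2 * Real.exp (-(2 * (lam - δ')) * t) := by rw [hB2def]; ring
      _ ≤ (max B1 B2 + min A1 A2 + 1) * Real.exp (-2 * (lam - δ) * t) := by
          apply mul_le_mul ?_ (Real.exp_le_exp.mpr (by nlinarith)) (Real.exp_pos _).le hBmax
          have := le_max_right B1 B2
          have := lt_min hA1pos hA2pos
          linarith
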